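/- arXiv:1801.06112 — 3 statements merged into one kernel-verified Lean document; each statement's English description precedes it below -/
import Mathlib

section
/- Let P = Q[x_1,...,x_n], σ a term ordering, I an ideal with reduced σ-Gröbner basis G_σ, F a finite subset of I, and δ a positive integer such that all coefficients of polynomials in G_σ ∪ F lie in the localization Z_δ. If p is a prime not dividing δ, then the ideal generated by π_p(F) in F_p[x_1,...,x_n] is contained in the ideal generated by π_p(G_σ). -/
open MvPolynomial
open scoped Classical

namespace GB

variable {n : ℕ}

/-- The σ-leading exponent (leading term, as a power-product) of a polynomial;
`0` for the zero polynomial. -/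
noncomputable def lexp {K : Type*} [CommSemiring K] (m : MonomialOrder (Fin n))
    (f : MvPolynomial (Fin n) K) : Fin n →₀ ℕ :=
  m.toSyn.symm (f.support.sup fun d => m.toSyn d)

/-- The σ-leading coefficient. -/
noncomputable def lcoeff {K : Type*} [CommSemiring K] (m : MonomialOrder (Fin n))
    (f : MvPolynomial (Fin n) K) : K :=
  MvPolynomial.coeff (lexp m f) f

/-- The σ-leading monomial (leading coefficient times leading power-product). -/
noncomputable def LM {K : Type*} [CommSemiring K] (m : MonomialOrder (Fin n))
    (f : MvPolynomial (Fin n) K) : MvPolynomial (Fin n) K :=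
  monomial (lexp m f) (lcoeff m f)

/-- The leading term ideal `LT_σ(I)` of an ideal, over a field. -/
noncomputable def LTIdeal {K : Type*} [Field K] (m : MonomialOrder (Fin n))
    (I : Ideal (MvPolynomial (Fin n) K)) : Ideal (MvPolynomial (Fin n) K) :=
  Ideal.span {t | ∃ f ∈ I, f ≠ 0 ∧ t = monomial (lexp m f) (1 : K)}

/-- `G` is a σ-Gröbner basis of `I` (over a field). -/
def IsGB {K : Type*} [Field K] (m : MonomialOrder (Fin n))
    (G : Finset (MvPolynomial (Fin n) K)) (I : Ideal (MvPolynomial (Fin n) K)) : Prop :=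
  (0 : MvPolynomial (Fin n) K) ∉ G ∧ (G : Set (MvPolynomial (Fin n) K)) ⊆ I ∧
    Ideal.span (G : Set (MvPolynomial (Fin n) K)) = I ∧
    ∀ f ∈ I, f ≠ 0 → ∃ g ∈ G, lexp m g ≤ lexp m f

/-- `G` is the reduced σ-Gröbner basis of `I`. -/
def IsReducedGB {K : Type*} [Field K] (m : MonomialOrder (Fin n))
    (G : Finset (MvPolynomial (Fin n) K)) (I : Ideal (MvPolynomial (Fin n) K)) : Prop :=
  IsGB m G I ∧ (∀ g ∈ G, lcoeff m g = 1) ∧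
    ∀ g ∈ G, ∀ d ∈ g.support, ∀ g' ∈ G, g' ≠ g → ¬ lexp m g' ≤ d

/-- `G` is a strong σ-Gröbner basis of the ideal `J ⊆ ℤ[x]` it generates. -/
def IsStrongGB (m : MonomialOrder (Fin n)) (G : Finset (MvPolynomial (Fin n) ℤ))
    (J : Ideal (MvPolynomial (Fin n) ℤ)) : Prop :=
  (0 : MvPolynomial (Fin n) ℤ) ∉ G ∧ Ideal.span (G : Set (MvPolynomial (Fin n) ℤ)) = J ∧
    ∀ f ∈ J, f ≠ 0 → ∃ g ∈ G, LM m g ∣ LM m f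

/-- `G` is a minimal strong σ-Gröbner basis of `J`. -/
def IsMinStrongGB (m : MonomialOrder (Fin n)) (G : Finset (MvPolynomial (Fin n) ℤ))
    (J : Ideal (MvPolynomial (Fin n) ℤ)) : Prop :=
  IsStrongGB m G J ∧ ∀ g ∈ G, ∀ g' ∈ G, g ≠ g' → ¬ LM m g ∣ LM m g'

/-- The denominator of a polynomial with rational coefficients. -/
def den (f : MvPolynomial (Fin n) ℚ) : ℕ :=
  f.support.lcm fun d => (MvPolynomial.coeff d f).den

/-- The denominator of a finite set of polynomials. -/
noncomputable def denF (G : Finset (MvPolynomial (Fin n) ℚ)) : ℕ :=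
  G.lcm den

/-- `f` scaled by `den f`, as an integer polynomial. -/
noncomputable def intScale (f : MvPolynomial (Fin n) ℚ) : MvPolynomial (Fin n) ℤ :=
  f.support.sum fun d => monomial d (MvPolynomial.coeff d f * (den f : ℚ)).num

/-- The primitive integral part of a polynomial with rational coefficients. -/
noncomputable def primQ (f : MvPolynomial (Fin n) ℚ) : MvPolynomial (Fin n) ℤ :=
  (intScale f).support.sum fun d =>
    monomial d (MvPolynomial.coeff d (intScale f) /
      ((intScale f).support.gcd fun e => MvPolynomial.coeff e (intScale f)))

/-- Reduction of a rational number modulo `p` (meaningful when `p ∤ a.den`). -/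
noncomputable def redQ (p : ℕ) (a : ℚ) : ZMod p :=
  (a.num : ZMod p) * (a.den : ZMod p)⁻¹

/-- Coefficientwise reduction modulo `p` of a polynomial with rational coefficients
(meaningful when `p` divides no coefficient denominator). -/
noncomputable def piP (p : ℕ) (f : MvPolynomial (Fin n) ℚ) :
    MvPolynomial (Fin n) (ZMod p) :=
  f.support.sum fun d => monomial d (redQ p (MvPolynomial.coeff d f))

/-- A σ-ordered tuple of (necessarily distinct) power-products. -/
def SOrd (m : MonomialOrder (Fin n)) (L : List (Fin n →₀ ℕ)) : Prop :=
  L.Pairwise fun a b => m.toSyn a < m.toSyn b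

/-- `T'` strictly σ-precedes `T`:  either `T` is a proper prefix of `T'`, or at the first
index where they differ (within both lengths) the entry of `T'` is σ-smaller. -/
def Prec (m : MonomialOrder (Fin n)) (T' T : List (Fin n →₀ ℕ)) : Prop :=
  (T <+: T' ∧ T ≠ T') ∨
    ∃ k, k < T.length ∧ k < T'.length ∧ T.take k = T'.take k ∧
      m.toSyn (T'.getD k 0) < m.toSyn (T.getD k 0)

/-- `T'` σ-precedes or equals `T`. -/
def PrecEq (m : MonomialOrder (Fin n)) (T' T : List (Fin n →₀ ℕ)) : Prop :=
  Prec m T' T ∨ T' = T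

/-- The minimal generating set of the monomial ideal `LT_σ(I)`: the set of leading
power-products of nonzero elements of `I` which are minimal w.r.t. divisibility. -/
def minGenSet {K : Type*} [Field K] (m : MonomialOrder (Fin n))
    (I : Ideal (MvPolynomial (Fin n) K)) : Set (Fin n →₀ ℕ) :=
  {d | (∃ f ∈ I, f ≠ 0 ∧ lexp m f = d) ∧
    ∀ f ∈ I, f ≠ 0 → lexp m f ≤ d → lexp m f = d}

/-- `L` is the tuple `O_σ(I)`: the σ-ordered tuple of the minimal generating set
of `LT_σ(I)`. -/
def IsOsIdeal {K : Type*} [Field K] (m : MonomialOrder (Fin n))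
    (I : Ideal (MvPolynomial (Fin n) K)) (L : List (Fin n →₀ ℕ)) : Prop :=
  SOrd m L ∧ ∀ d, d ∈ L ↔ d ∈ minGenSet m I

/-- `L` is the σ-ordered tuple of the interreduction of the set `S` of power-products. -/
def IsOsSet (m : MonomialOrder (Fin n)) (S : Finset (Fin n →₀ ℕ))
    (L : List (Fin n →₀ ℕ)) : Prop :=
  SOrd m L ∧ ∀ d, d ∈ L ↔ (d ∈ S ∧ ∀ s ∈ S, s ≤ d → s = d)

end GB

section Aux

open MvPolynomial

variable {n : ℕ}

/-- All coefficients of `f` are `p`-integral. -/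
def PInt (p : ℕ) (f : MvPolynomial (Fin n) ℚ) : Prop :=
  ∀ d : Fin n →₀ ℕ, ¬ p ∣ (MvPolynomial.coeff d f).den

lemma den_cast_ne {p : ℕ} [Fact p.Prime] {a : ℚ} (h : ¬ p ∣ a.den) :
    ((a.den : ZMod p) ≠ 0) := by
  simpa [ZMod.natCast_eq_zero_iff] using h

lemma redQ_eq_cast (p : ℕ) [Fact p.Prime] (a : ℚ) : GB.redQ p a = (a : ZMod p) := by
  rw [GB.redQ, Rat.cast_def, div_eq_mul_inv]

lemma coeff_piP (p : ℕ) [Fact p.Prime] (f : MvPolynomial (Fin n) ℚ) (d : Fin n →₀ ℕ) :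
    MvPolynomial.coeff d (GB.piP p f) = ((MvPolynomial.coeff d f : ℚ) : ZMod p) := by
  classical
  rw [GB.piP]
  rw [MvPolynomial.coeff_sum]
  simp_rw [MvPolynomial.coeff_monomial]
  rw [Finset.sum_ite_eq' f.support d (fun e => GB.redQ p (MvPolynomial.coeff e f))]
  by_cases hd : d ∈ f.support
  · rw [if_pos hd, redQ_eq_cast]
  · rw [if_neg hd, MvPolynomial.notMem_support_iff.mp hd, Rat.cast_zero]

lemma piP_add {p : ℕ} [Fact p.Prime] {a b : MvPolynomial (Fin n) ℚ}
    (ha : PInt p a) (hb : PInt p b) : GB.piP p (a + b) = GB.piP p a + GB.piP p b := by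
  ext d
  rw [MvPolynomial.coeff_add, coeff_piP, coeff_piP, coeff_piP, MvPolynomial.coeff_add,
    Rat.cast_add_of_ne_zero (den_cast_ne (ha d)) (den_cast_ne (hb d))]

lemma piP_monomial_mul {p : ℕ} [Fact p.Prime] {c : ℚ} (e : Fin n →₀ ℕ)
    {g : MvPolynomial (Fin n) ℚ} (hc : ¬ p ∣ c.den) (hg : PInt p g) :
    GB.piP p (MvPolynomial.monomial e c * g) =
      MvPolynomial.monomial e ((c : ℚ) : ZMod p) * GB.piP p g := by
  ext d
  rw [coeff_piP, MvPolynomial.coeff_monomial_mul', MvPolynomial.coeff_monomial_mul']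
  split_ifs with h
  · rw [coeff_piP, Rat.cast_mul_of_ne_zero (den_cast_ne hc) (den_cast_ne (hg _))]
  · rw [Rat.cast_zero]

lemma PInt.add {p : ℕ} (hp : p.Prime) {a b : MvPolynomial (Fin n) ℚ}
    (ha : PInt p a) (hb : PInt p b) : PInt p (a + b) := by
  intro d hdvd
  rw [MvPolynomial.coeff_add] at hdvd
  have := dvd_trans hdvd (Rat.add_den_dvd _ _)
  rcases (Nat.Prime.dvd_mul hp).mp this with h | h
  exacts [ha d h, hb d h]

lemma PInt.neg {p : ℕ} {b : MvPolynomial (Fin n) ℚ} (hb : PInt p b) : PInt p (-b) := by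
  intro d
  rw [MvPolynomial.coeff_neg, Rat.neg_den]
  exact hb d

lemma PInt.sub {p : ℕ} (hp : p.Prime) {a b : MvPolynomial (Fin n) ℚ}
    (ha : PInt p a) (hb : PInt p b) : PInt p (a - b) := by
  rw [sub_eq_add_neg]; exact ha.add hp hb.neg

lemma PInt.monomial_mul {p : ℕ} (hp : p.Prime) {c : ℚ} (e : Fin n →₀ ℕ)
    {g : MvPolynomial (Fin n) ℚ} (hc : ¬ p ∣ c.den) (hg : PInt p g) :
    PInt p (MvPolynomial.monomial e c * g) := by
  intro d hdvd
  rw [MvPolynomial.coeff_monomial_mul'] at hdvd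
  split_ifs at hdvd with h
  · rcases (Nat.Prime.dvd_mul hp).mp (dvd_trans hdvd (Rat.mul_den_dvd _ _)) with h' | h'
    exacts [hc h', hg _ h']
  · rw [Rat.den_zero] at hdvd
    exact hp.one_lt.ne' (Nat.dvd_one.mp hdvd)

lemma toSyn_lexp (m : MonomialOrder (Fin n)) (f : MvPolynomial (Fin n) ℚ) :
    m.toSyn (GB.lexp m f) = f.support.sup fun d => m.toSyn d := by
  rw [GB.lexp, AddEquiv.apply_symm_apply]

lemma le_toSyn_lexp (m : MonomialOrder (Fin n)) {f : MvPolynomial (Fin n) ℚ}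
    {d : Fin n →₀ ℕ} (hd : d ∈ f.support) : m.toSyn d ≤ m.toSyn (GB.lexp m f) := by
  rw [toSyn_lexp]; exact Finset.le_sup hd

lemma lexp_mem (m : MonomialOrder (Fin n)) {f : MvPolynomial (Fin n) ℚ} (hf : f ≠ 0) :
    GB.lexp m f ∈ f.support := by
  obtain ⟨b, hb, he⟩ := Finset.exists_mem_eq_sup f.support
    (MvPolynomial.support_nonempty.mpr hf) (fun d => m.toSyn d)
  rw [GB.lexp, he, AddEquiv.symm_apply_apply]
  exact hb

end Aux

lemma key_mem (m : MonomialOrder (Fin n)) (I : Ideal (MvPolynomial (Fin n) ℚ))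
    (G : Finset (MvPolynomial (Fin n) ℚ)) (hG : GB.IsReducedGB m G I)
    (p : ℕ) [Fact p.Prime] (hGp : ∀ g ∈ G, PInt p g) :
    ∀ f, f ∈ I → PInt p f →
      GB.piP p f ∈ Ideal.span ((G.image (GB.piP p) : Finset (MvPolynomial (Fin n) (ZMod p))) :
        Set (MvPolynomial (Fin n) (ZMod p))) := by
  classical
  have hp : p.Prime := Fact.out
  suffices H : ∀ s : m.syn, ∀ f, f ∈ I → PInt p f → m.toSyn (GB.lexp m f) = s →
      GB.piP p f ∈ Ideal.span ((G.image (GB.piP p) : Finset (MvPolynomial (Fin n) (ZMod p))) :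
        Set (MvPolynomial (Fin n) (ZMod p))) by
    exact fun f hf hfp => H _ f hf hfp rfl
  intro s
  induction s using WellFoundedLT.induction with
  | _ s ih =>
  intro f hfI hfp hs
  by_cases hf0 : f = 0
  · have : GB.piP p f = 0 := by
      ext d; rw [coeff_piP, hf0]; simp
    rw [this]; exact Ideal.zero_mem _
  obtain ⟨g, hgG, hle⟩ := hG.1.2.2.2 f hfI hf0
  have hg0 : g ≠ 0 := fun h => hG.1.1 (h ▸ hgG)
  set e : Fin n →₀ ℕ := GB.lexp m f - GB.lexp m g with he
  have hee : GB.lexp m g + e = GB.lexp m f := add_tsub_cancel_of_le hle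
  set c : ℚ := GB.lcoeff m f with hc
  set f' : MvPolynomial (Fin n) ℚ := f - MvPolynomial.monomial e c * g with hf'
  have hfe : f = f' + MvPolynomial.monomial e c * g := by rw [hf']; ring
  have hgI : g ∈ I := hG.1.2.1 hgG
  have hf'I : f' ∈ I := I.sub_mem hfI (I.mul_mem_left _ hgI)
  have hgp : PInt p g := hGp g hgG
  have hcp : ¬ p ∣ c.den := hfp _
  have hmp : PInt p (MvPolynomial.monomial e c * g) := PInt.monomial_mul hp e hcp hgp
  have hf'p : PInt p f' := hfp.sub hp hmp
  have hmemG : GB.piP p g ∈ Ideal.span ((G.image (GB.piP p) :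
      Finset (MvPolynomial (Fin n) (ZMod p))) : Set (MvPolynomial (Fin n) (ZMod p))) :=
    Ideal.subset_span (by simp only [Finset.coe_image, Set.mem_image]; exact ⟨g, hgG, rfl⟩)
  have hlc : MvPolynomial.coeff (GB.lexp m g) g = 1 := hG.2.1 g hgG
  have hcoefflead : MvPolynomial.coeff (GB.lexp m f) (MvPolynomial.monomial e c * g) = c := by
    rw [← hee, add_comm, MvPolynomial.coeff_monomial_mul', if_pos le_self_add,
      add_tsub_cancel_left, hlc, mul_one]
  have hsupp : ∀ d ∈ f'.support, m.toSyn d < m.toSyn (GB.lexp m f) := by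
    intro d hd
    rcases lt_trichotomy (m.toSyn d) (m.toSyn (GB.lexp m f)) with h | h | h
    · exact h
    · exfalso
      have hdl : d = GB.lexp m f := m.toSyn.injective h
      have : MvPolynomial.coeff d f' = 0 := by
        rw [hdl, hf', MvPolynomial.coeff_sub, hcoefflead, hc, GB.lcoeff, sub_self]
      exact MvPolynomial.mem_support_iff.mp hd this
    · exfalso
      have h1 : MvPolynomial.coeff d f = 0 := by
        by_contra hne
        exact absurd (le_toSyn_lexp m (MvPolynomial.mem_support_iff.mpr hne)) (not_le.mpr h)
      have h2 : MvPolynomial.coeff d (MvPolynomial.monomial e c * g) = 0 := by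
        rw [MvPolynomial.coeff_monomial_mul']
        split_ifs with hed
        · have hz : MvPolynomial.coeff (d - e) g = 0 := by
            by_contra hne
            have h3 : m.toSyn (d - e) ≤ m.toSyn (GB.lexp m g) :=
              le_toSyn_lexp m (MvPolynomial.mem_support_iff.mpr hne)
            have h4 : d = (d - e) + e := (tsub_add_cancel_of_le hed).symm
            have : m.toSyn d ≤ m.toSyn (GB.lexp m f) := by
              rw [h4, ← hee, map_add, map_add]
              exact add_le_add_left h3 _
            exact absurd this (not_le.mpr h)
          rw [hz, mul_zero]
        · rfl
      have : MvPolynomial.coeff d f' = 0 := by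
        rw [hf', MvPolynomial.coeff_sub, h1, h2, sub_self]
      exact MvPolynomial.mem_support_iff.mp hd this
  by_cases hf'0 : f' = 0
  · rw [hfe, hf'0, zero_add, piP_monomial_mul e hcp hgp]
    exact Ideal.mul_mem_left _ _ hmemG
  · have hne : f'.support.Nonempty := MvPolynomial.support_nonempty.mpr hf'0
    have hlt : m.toSyn (GB.lexp m f') < s := by
      rw [← hs, toSyn_lexp]
      obtain ⟨d0, hd0⟩ := hne
      have hbot : (⊥ : m.syn) < m.toSyn (GB.lexp m f) :=
        lt_of_le_of_lt bot_le (hsupp d0 hd0)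
      exact (Finset.sup_lt_iff hbot).mpr hsupp
    have ihf' := ih _ hlt f' hf'I hf'p rfl
    rw [hfe, piP_add hf'p hmp, piP_monomial_mul e hcp hgp]
    exact Ideal.add_mem _ ihf' (Ideal.mul_mem_left _ _ hmemG)



/-- `⟨π_p(F)⟩ ⊆ ⟨π_p(G_σ)⟩` for any finite `F ⊆ I` with coefficients
in `ℤ_δ`, when `p ∤ δ`. -/
theorem stmt8 {n : ℕ} (m : MonomialOrder (Fin n))
    (I : Ideal (MvPolynomial (Fin n) ℚ)) (G F : Finset (MvPolynomial (Fin n) ℚ))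
    (hG : GB.IsReducedGB m G I) (hF : (F : Set (MvPolynomial (Fin n) ℚ)) ⊆ I)
    (δ : ℕ) (hδ : 0 < δ)
    (hcoef : ∀ f ∈ G ∪ F, ∀ q : ℕ, q.Prime → q ∣ GB.den f → q ∣ δ)
    (p : ℕ) [Fact p.Prime] (hp : ¬ p ∣ δ) :
    Ideal.span ((F.image (GB.piP p) : Finset (MvPolynomial (Fin n) (ZMod p))) :
        Set (MvPolynomial (Fin n) (ZMod p))) ≤
      Ideal.span ((G.image (GB.piP p) : Finset (MvPolynomial (Fin n) (ZMod p))) :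
        Set (MvPolynomial (Fin n) (ZMod p))) := by
  classical
  rw [Ideal.span_le]
  intro x hx
  simp only [Finset.coe_image, Set.mem_image, Finset.mem_coe] at hx
  obtain ⟨f, hfF, rfl⟩ := hx
  have hpp : p.Prime := Fact.out
  have hpi : ∀ h ∈ G ∪ F, PInt p h := by
    intro h hh d hdvd
    by_cases hd : d ∈ h.support
    · have h1 : (MvPolynomial.coeff d h).den ∣ GB.den h := Finset.dvd_lcm hd
      exact hp (hcoef h hh p hpp (dvd_trans hdvd h1))
    · rw [MvPolynomial.notMem_support_iff.mp hd, Rat.den_zero] at hdvd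
      exact hpp.one_lt.ne' (Nat.dvd_one.mp hdvd)
  exact key_mem m I G hG p (fun g hg => hpi g (Finset.mem_union_left F hg)) f (hF hfF)
    (hpi f (Finset.mem_union_right G hfF))
end

section
/- Let P = Q[x_1,...,x_n], σ a term ordering, I a nonzero ideal with reduced σ-Gröbner basis G_σ = {g_1,...,g_r} indexed so that LT_σ(g_1) <_σ ... <_σ LT_σ(g_r). Let G̃ = {g̃_1,...,g̃_s} be a minimal strong σ-Gröbner basis of the ideal J = ⟨prim(G_σ)⟩ ⊆ Z[x_1,...,x_n]. Then the elements of G̃ can be indexed so that LT_σ(g̃_i) = LT_σ(g_i) for i = 1,...,r, while for i = r+1,...,s each LT_σ(g̃_i) is a proper multiple of LT_σ(g_k) for some k ≤ r. -/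
open MvPolynomial
open scoped Classical

namespace GB

open MvPolynomial

variable {n : ℕ} (m : MonomialOrder (Fin n))

section basic

variable {K : Type*} [CommSemiring K]

lemma toSyn_lexp (f : MvPolynomial (Fin n) K) :
    m.toSyn (lexp m f) = f.support.sup fun d => m.toSyn d := by
  simp [lexp]

lemma le_toSyn_lexp {f : MvPolynomial (Fin n) K} {d : Fin n →₀ ℕ}
    (hd : d ∈ f.support) : m.toSyn d ≤ m.toSyn (lexp m f) := by
  rw [toSyn_lexp]; exact Finset.le_sup hd

lemma lexp_mem_support {f : MvPolynomial (Fin n) K} (hf : f ≠ 0) :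
    lexp m f ∈ f.support := by
  have hne : f.support.Nonempty := MvPolynomial.support_nonempty.mpr hf
  obtain ⟨d, hd, hds⟩ := Finset.exists_mem_eq_sup f.support hne (fun d => m.toSyn d)
  have : lexp m f = d := by simp [lexp, hds]
  rw [this]; exact hd

lemma lcoeff_ne_zero {f : MvPolynomial (Fin n) K} (hf : f ≠ 0) :
    lcoeff m f ≠ 0 := by
  have := lexp_mem_support m hf
  simpa [lcoeff, MvPolynomial.mem_support_iff] using this

lemma lexp_eq_of {f : MvPolynomial (Fin n) K} {d : Fin n →₀ ℕ}
    (h1 : MvPolynomial.coeff d f ≠ 0)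
    (h2 : ∀ e ∈ f.support, m.toSyn e ≤ m.toSyn d) : lexp m f = d := by
  have hd : d ∈ f.support := MvPolynomial.mem_support_iff.mpr h1
  have hle := le_toSyn_lexp m hd
  have hf : f ≠ 0 := fun h => by simp [h] at h1
  have hge := h2 _ (lexp_mem_support m hf)
  exact m.toSyn.injective (le_antisymm hge hle)

lemma lexp_support_eq {f g : MvPolynomial (Fin n) K} (h : f.support = g.support) :
    lexp m f = lexp m g := by
  simp [lexp, h]

end basic

lemma lexp_map (f : MvPolynomial (Fin n) ℤ) :
    lexp m (MvPolynomial.map (Int.castRingHom ℚ) f) = lexp m f := by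
  unfold lexp
  rw [MvPolynomial.support_map_of_injective f Int.cast_injective]

lemma lexp_smul {q : ℚ} (hq : q ≠ 0) (f : MvPolynomial (Fin n) ℚ) :
    lexp m (q • f) = lexp m f := by
  refine lexp_support_eq m ?_
  ext e
  simp [MvPolynomial.mem_support_iff, MvPolynomial.coeff_smul, hq]

lemma monomial_dvd_monomial_of {d e : Fin n →₀ ℕ} {c c' : ℤ} (hde : d ≤ e) (hcc : c ∣ c') :
    (monomial d c : MvPolynomial (Fin n) ℤ) ∣ monomial e c' := by
  obtain ⟨k, rfl⟩ := hcc
  exact ⟨monomial (e - d) k, by rw [MvPolynomial.monomial_mul, add_tsub_cancel_of_le hde]⟩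

lemma dvd_monomial_of_dvd {d e : Fin n →₀ ℕ} {c c' : ℤ} (hc' : c' ≠ 0)
    (h : (monomial d c : MvPolynomial (Fin n) ℤ) ∣ monomial e c') : d ≤ e ∧ c ∣ c' := by
  obtain ⟨q, hq⟩ := h
  have h1 : c' = MvPolynomial.coeff e ((monomial d c : MvPolynomial (Fin n) ℤ) * q) := by
    rw [← hq, MvPolynomial.coeff_monomial, if_pos rfl]
  have h2 := h1
  rw [MvPolynomial.coeff_mul] at h2
  have hsum : (∑ p ∈ Finset.HasAntidiagonal.antidiagonal e,
      MvPolynomial.coeff p.1 (monomial d c : MvPolynomial (Fin n) ℤ) * MvPolynomial.coeff p.2 q)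
      ≠ 0 := h2 ▸ hc'
  obtain ⟨p, hp, hpne⟩ := Finset.exists_ne_zero_of_sum_ne_zero hsum
  have hp1 : MvPolynomial.coeff p.1 (monomial d c : MvPolynomial (Fin n) ℤ) ≠ 0 :=
    fun h => hpne (by rw [h, zero_mul])
  have hpd : p.1 = d := by
    by_contra hne
    rw [MvPolynomial.coeff_monomial, if_neg (fun h => hne h.symm)] at hp1
    exact hp1 rfl
  have hadd : d + p.2 = e := by
    have := Finset.HasAntidiagonal.mem_antidiagonal.mp hp
    rw [← hpd]; exact this
  constructor
  · exact le_iff_exists_add.mpr ⟨p.2, hadd.symm⟩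
  · refine ⟨MvPolynomial.coeff p.2 q, ?_⟩
    rw [← hadd, MvPolynomial.coeff_monomial_mul] at h1
    exact h1

/-- divisibility of leading monomials -/
lemma lexp_le_of_LM_dvd {f g : MvPolynomial (Fin n) ℤ} (hf : f ≠ 0)
    (h : LM m g ∣ LM m f) : lexp m g ≤ lexp m f ∧ lcoeff m g ∣ lcoeff m f :=
  dvd_monomial_of_dvd (lcoeff_ne_zero m hf) h

section rat

lemma den_spec (f : MvPolynomial (Fin n) ℚ) (d : Fin n →₀ ℕ) :
    (MvPolynomial.coeff d f).den ∣ den f := by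
  by_cases hd : d ∈ f.support
  · exact Finset.dvd_lcm hd
  · rw [MvPolynomial.notMem_support_iff.mp hd]
    exact one_dvd _

lemma den_ne_zero (f : MvPolynomial (Fin n) ℚ) : den f ≠ 0 := by
  intro h
  have := Finset.lcm_eq_zero_iff.mp h
  obtain ⟨d, _, hd⟩ := this
  exact (MvPolynomial.coeff d f).den_nz hd

lemma cast_num_mul_den_dvd {a : ℚ} {N : ℕ} (h : a.den ∣ N) :
    ((a * N).num : ℚ) = a * N := by
  obtain ⟨k, hk⟩ := h
  have hden : (a.den : ℚ) ≠ 0 := Nat.cast_ne_zero.mpr a.den_nz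
  have h0 : a * (a.den : ℚ) = (a.num : ℚ) := by
    nth_rewrite 1 [← Rat.num_div_den a]
    rw [div_mul_cancel₀ _ hden]
  have h1 : a * (N : ℚ) = ((a.num * k : ℤ) : ℚ) := by
    subst hk; push_cast; rw [← mul_assoc, h0]
  rw [h1, Rat.num_intCast]

lemma coeff_intScale (f : MvPolynomial (Fin n) ℚ) (e : Fin n →₀ ℕ) :
    MvPolynomial.coeff e (intScale f) = (MvPolynomial.coeff e f * (den f : ℚ)).num := by
  unfold intScale
  rw [MvPolynomial.coeff_sum]
  by_cases he : e ∈ f.support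
  · rw [Finset.sum_eq_single e]
    · simp
    · intro b _ hb
      simp [MvPolynomial.coeff_monomial, hb]
    · intro h; exact absurd he h
  · rw [Finset.sum_eq_zero, MvPolynomial.notMem_support_iff.mp he, zero_mul, Rat.num_ofNat]
    intro b hb
    have hbe : b ≠ e := fun h => he (h ▸ hb)
    simp [MvPolynomial.coeff_monomial, hbe]

lemma map_intScale (f : MvPolynomial (Fin n) ℚ) :
    MvPolynomial.map (Int.castRingHom ℚ) (intScale f) = (den f : ℚ) • f := by
  ext e
  rw [MvPolynomial.coeff_map, coeff_intScale, MvPolynomial.coeff_smul]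
  show (((MvPolynomial.coeff e f * (den f : ℚ)).num : ℤ) : ℚ) = (den f : ℚ) • MvPolynomial.coeff e f
  rw [cast_num_mul_den_dvd (den_spec f e), smul_eq_mul, mul_comm]

end rat

lemma intScale_ne_zero {f : MvPolynomial (Fin n) ℚ} (hf : f ≠ 0) : intScale f ≠ 0 := by
  obtain ⟨d, hd⟩ := MvPolynomial.support_nonempty.mpr hf
  have hc : MvPolynomial.coeff d f ≠ 0 := MvPolynomial.mem_support_iff.mp hd
  intro h
  have h1 : MvPolynomial.coeff d (intScale f) = 0 := by rw [h]; rfl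
  rw [coeff_intScale] at h1
  have h2 : MvPolynomial.coeff d f * (den f : ℚ) ≠ 0 :=
    mul_ne_zero hc (Nat.cast_ne_zero.mpr (den_ne_zero f))
  exact h2 (Rat.num_eq_zero.mp h1)

lemma coeff_primQ (f : MvPolynomial (Fin n) ℚ) (e : Fin n →₀ ℕ) :
    MvPolynomial.coeff e (primQ f) = MvPolynomial.coeff e (intScale f) /
      ((intScale f).support.gcd fun e => MvPolynomial.coeff e (intScale f)) := by
  unfold primQ
  rw [MvPolynomial.coeff_sum]
  by_cases he : e ∈ (intScale f).support
  · rw [Finset.sum_eq_single e]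
    · simp
    · intro b _ hb
      simp [MvPolynomial.coeff_monomial, hb]
    · intro h; exact absurd he h
  · rw [Finset.sum_eq_zero, MvPolynomial.notMem_support_iff.mp he, Int.zero_ediv]
    intro b hb
    have hbe : b ≠ e := fun h => he (h ▸ hb)
    simp [MvPolynomial.coeff_monomial, hbe]

lemma map_primQ (f : MvPolynomial (Fin n) ℚ) (hf : f ≠ 0) :
    ∃ q : ℚ, q ≠ 0 ∧ MvPolynomial.map (Int.castRingHom ℚ) (primQ f) = q • f := by
  have hs0 : intScale f ≠ 0 := intScale_ne_zero hf
  set g : ℤ := (intScale f).support.gcd fun e => MvPolynomial.coeff e (intScale f) with hg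
  have hgdvd : ∀ e, g ∣ MvPolynomial.coeff e (intScale f) := by
    intro e
    by_cases he : e ∈ (intScale f).support
    · exact Finset.gcd_dvd he
    · rw [MvPolynomial.notMem_support_iff.mp he]; exact dvd_zero g
  have hgne : g ≠ 0 := by
    intro h
    obtain ⟨e, he⟩ := MvPolynomial.support_nonempty.mpr hs0
    exact (MvPolynomial.mem_support_iff.mp he) (Finset.gcd_eq_zero_iff.mp (hg ▸ h) e he)
  have hgQ : (g : ℚ) ≠ 0 := Int.cast_ne_zero.mpr hgne
  refine ⟨((g : ℚ))⁻¹ * (den f : ℚ),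
    mul_ne_zero (inv_ne_zero hgQ) (Nat.cast_ne_zero.mpr (den_ne_zero f)), ?_⟩
  ext e
  rw [MvPolynomial.coeff_map, coeff_primQ, MvPolynomial.coeff_smul]
  obtain ⟨k, hk⟩ := hgdvd e
  have hdiv : MvPolynomial.coeff e (intScale f) / g = k := by
    rw [hk]; exact Int.mul_ediv_cancel_left k hgne
  have hcast : ((MvPolynomial.coeff e (intScale f) : ℤ) : ℚ) = (den f : ℚ) * MvPolynomial.coeff e f := by
    rw [coeff_intScale, cast_num_mul_den_dvd (den_spec f e), mul_comm]
  have hk2 : (g : ℚ) * (k : ℚ) = (den f : ℚ) * MvPolynomial.coeff e f := by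
    rw [← Int.cast_mul, ← hk, hcast]
  show ((MvPolynomial.coeff e (intScale f) / g : ℤ) : ℚ) = _
  rw [hdiv, smul_eq_mul, mul_assoc, ← hk2, inv_mul_cancel_left₀ hgQ]

lemma primQ_ne_zero {f : MvPolynomial (Fin n) ℚ} (hf : f ≠ 0) : primQ f ≠ 0 := by
  obtain ⟨q, hq0, hqe⟩ := map_primQ f hf
  intro h
  rw [h, map_zero] at hqe
  apply hf
  ext d
  have h2 : q * MvPolynomial.coeff d f = 0 := by
    rw [← smul_eq_mul, ← MvPolynomial.coeff_smul, ← hqe, MvPolynomial.coeff_zero]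
  rw [MvPolynomial.coeff_zero]
  exact (mul_eq_zero.mp h2).resolve_left hq0

lemma lexp_primQ {f : MvPolynomial (Fin n) ℚ} (hf : f ≠ 0) :
    lexp m (primQ f) = lexp m f := by
  obtain ⟨q, hq0, hqe⟩ := map_primQ f hf
  rw [← lexp_map m, hqe, lexp_smul m hq0]

end GB
/-- a minimal strong σ-Gröbner basis of `⟨prim(G_σ)⟩ ⊆ ℤ[x]` can be
indexed so that its first `r` leading terms agree with those of the reduced
σ-Gröbner basis `G_σ = (g_1, …, g_r)`, and every later leading term is a proper
multiple of some `LT_σ(g_k)`, `k ≤ r`. -/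
theorem stmt10 {n : ℕ} (m : MonomialOrder (Fin n))
    (I : Ideal (MvPolynomial (Fin n) ℚ)) (hI : I ≠ ⊥)
    (Gl : List (MvPolynomial (Fin n) ℚ)) (hGnd : Gl.Nodup)
    (hGred : GB.IsReducedGB m Gl.toFinset I)
    (hsort : Gl.Pairwise fun g h => m.toSyn (GB.lexp m g) < m.toSyn (GB.lexp m h))
    (Gt : Finset (MvPolynomial (Fin n) ℤ))
    (hGt : GB.IsMinStrongGB m Gt
      (Ideal.span (GB.primQ '' (Gl.toFinset : Set (MvPolynomial (Fin n) ℚ))))) :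
    ∃ Gtl : List (MvPolynomial (Fin n) ℤ), Gtl.Nodup ∧ Gtl.toFinset = Gt ∧
      Gl.length ≤ Gtl.length ∧
      (∀ i < Gl.length, GB.lexp m (Gtl.getD i 0) = GB.lexp m (Gl.getD i 0)) ∧
      ∀ i, Gl.length ≤ i → i < Gtl.length →
        ∃ j < Gl.length, GB.lexp m (Gl.getD j 0) ≤ GB.lexp m (Gtl.getD i 0) ∧
          GB.lexp m (Gl.getD j 0) ≠ GB.lexp m (Gtl.getD i 0) := by
  classical
  obtain ⟨⟨hG0, hGsub, hGspan, hGdiv⟩, hGmon, hGredc⟩ := hGred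
  obtain ⟨⟨hT0, hTspan, hTdiv⟩, hTmin⟩ := hGt
  set J := Ideal.span (GB.primQ '' (Gl.toFinset : Set (MvPolynomial (Fin n) ℚ))) with hJ
  have hGlne : ∀ g ∈ Gl, g ≠ 0 := fun g hg h => hG0 (h ▸ List.mem_toFinset.mpr hg)
  have hTne : ∀ t ∈ Gt, t ≠ 0 := fun t ht h => hT0 (h ▸ ht)
  have hTJ : ∀ t ∈ Gt, t ∈ J := fun t ht => hTspan ▸ Ideal.subset_span ht
  -- map of J lands in I
  have hmapI : ∀ t ∈ J, MvPolynomial.map (Int.castRingHom ℚ) t ∈ I := by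
    intro t ht
    have h1 : Ideal.map (MvPolynomial.map (Int.castRingHom ℚ) :
        MvPolynomial (Fin n) ℤ →+* MvPolynomial (Fin n) ℚ) J ≤ I := by
      rw [hJ, Ideal.map_span]
      refine Ideal.span_le.mpr ?_
      rintro x ⟨y, ⟨g, hg, rfl⟩, rfl⟩
      have hgI : g ∈ I := hGsub hg
      have hgne : g ≠ 0 := fun h => hG0 (h ▸ hg)
      obtain ⟨q, hq0, hqe⟩ := GB.map_primQ g hgne
      show MvPolynomial.map (Int.castRingHom ℚ) (GB.primQ g) ∈ I
      rw [hqe, MvPolynomial.smul_eq_C_mul]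
      exact Ideal.mul_mem_left _ _ hgI
    exact h1 (Ideal.mem_map_of_mem _ ht)
  -- any nonzero element of J has lexp bounded below by some element of Gl
  have hlowJ : ∀ t ∈ J, t ≠ 0 → ∃ g ∈ Gl, GB.lexp m g ≤ GB.lexp m t := by
    intro t ht htne
    have hmt : MvPolynomial.map (Int.castRingHom ℚ) t ∈ I := hmapI t ht
    have hmtne : MvPolynomial.map (Int.castRingHom ℚ) t ≠ 0 := by
      intro h
      apply htne
      exact MvPolynomial.map_injective (Int.castRingHom ℚ) Int.cast_injective
        (by rw [h, map_zero])
    obtain ⟨g, hg, hle⟩ := hGdiv _ hmt hmtne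
    exact ⟨g, List.mem_toFinset.mp hg, by rwa [GB.lexp_map] at hle⟩
  -- no two distinct elements of Gt share a leading power-product
  have noTwo : ∀ t ∈ Gt, ∀ t' ∈ Gt, t ≠ t' → GB.lexp m t ≠ GB.lexp m t' := by
    intro t ht t' ht' hnett hl
    have hc : GB.lcoeff m t ≠ 0 := GB.lcoeff_ne_zero m (hTne t ht)
    have hc' : GB.lcoeff m t' ≠ 0 := GB.lcoeff_ne_zero m (hTne t' ht')
    set c := GB.lcoeff m t with hcdef
    set c' := GB.lcoeff m t' with hc'def
    set d := GB.lexp m t with hddef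
    set f := MvPolynomial.C (Int.gcdA c c') * t + MvPolynomial.C (Int.gcdB c c') * t'
      with hfdef
    have hfJ : f ∈ J := Ideal.add_mem _ (Ideal.mul_mem_left _ _ (hTJ t ht))
      (Ideal.mul_mem_left _ _ (hTJ t' ht'))
    have hcoefft : MvPolynomial.coeff d t = c := rfl
    have hcoefft' : MvPolynomial.coeff d t' = c' := by
      rw [hl]; rfl
    have hcf : MvPolynomial.coeff d f = (Int.gcd c c' : ℤ) := by
      rw [hfdef, MvPolynomial.coeff_add, MvPolynomial.coeff_C_mul,
        MvPolynomial.coeff_C_mul, hcoefft, hcoefft', Int.gcd_eq_gcd_ab]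
      ring
    have hgcdnat : Int.gcd c c' ≠ 0 := fun h => hc ((Int.gcd_eq_zero_iff.mp h).1)
    have hgcd0 : (Int.gcd c c' : ℤ) ≠ 0 := Int.natCast_ne_zero.mpr hgcdnat
    have hcf0 : MvPolynomial.coeff d f ≠ 0 := by rw [hcf]; exact hgcd0
    have hfne : f ≠ 0 := fun h => hcf0 (by rw [h, MvPolynomial.coeff_zero])
    have hlexpf : GB.lexp m f = d := by
      refine GB.lexp_eq_of m hcf0 ?_
      intro e he
      have := MvPolynomial.support_add he
      rcases Finset.mem_union.mp this with h1 | h1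
      · have h2 : e ∈ t.support := by
          rw [MvPolynomial.mem_support_iff] at h1 ⊢
          intro h; exact h1 (by rw [MvPolynomial.coeff_C_mul, h, mul_zero])
        exact GB.le_toSyn_lexp m h2
      · have h2 : e ∈ t'.support := by
          rw [MvPolynomial.mem_support_iff] at h1 ⊢
          intro h; exact h1 (by rw [MvPolynomial.coeff_C_mul, h, mul_zero])
        have := GB.le_toSyn_lexp m h2
        rwa [← hl] at this
    have hlcf : GB.lcoeff m f = (Int.gcd c c' : ℤ) := by
      rw [GB.lcoeff, hlexpf, hcf]
    obtain ⟨h, hh, hdvd⟩ := hTdiv f hfJ hfne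
    obtain ⟨hle, hcd⟩ := GB.lexp_le_of_LM_dvd m hfne hdvd
    rw [hlexpf] at hle
    rw [hlcf] at hcd
    have hdvdt : GB.LM m h ∣ GB.LM m t :=
      GB.monomial_dvd_monomial_of hle (dvd_trans hcd (Int.gcd_dvd_left c c'))
    have hdvdt' : GB.LM m h ∣ GB.LM m t' := by
      have hLMt' : GB.LM m t' = monomial d c' := by rw [hl]; rfl
      rw [hLMt']
      exact GB.monomial_dvd_monomial_of hle (dvd_trans hcd (Int.gcd_dvd_right c c'))
    have hht : h = t := by
      by_contra hne
      exact hTmin h hh t ht hne hdvdt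
    have hht' : h = t' := by
      by_contra hne
      exact hTmin h hh t' ht' hne hdvdt'
    exact hnett (hht ▸ hht')
  -- each g in Gl is matched by some t in Gt with the same leading power-product
  have hmatch : ∀ g ∈ Gl, ∃ t, t ∈ Gt ∧ GB.lexp m t = GB.lexp m g := by
    intro g hg
    have hgne := hGlne g hg
    have hpJ : GB.primQ g ∈ J :=
      Ideal.subset_span ⟨g, List.mem_toFinset.mpr hg, rfl⟩
    have hpne : GB.primQ g ≠ 0 := GB.primQ_ne_zero hgne
    have hlexp : GB.lexp m (GB.primQ g) = GB.lexp m g := GB.lexp_primQ m hgne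
    obtain ⟨t, ht, hdvd⟩ := hTdiv _ hpJ hpne
    obtain ⟨hle, -⟩ := GB.lexp_le_of_LM_dvd m hpne hdvd
    rw [hlexp] at hle
    obtain ⟨g', hg', hle'⟩ := hlowJ t (hTJ t ht) (hTne t ht)
    have hle'' : GB.lexp m g' ≤ GB.lexp m g := le_trans hle' hle
    have hgg : g' = g := by
      by_contra hne
      exact hGredc g (List.mem_toFinset.mpr hg) _ (GB.lexp_mem_support m hgne) g'
        (List.mem_toFinset.mpr hg') hne hle''
    rw [hgg] at hle'
    exact ⟨t, ht, le_antisymm hle hle'⟩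
  -- lexp is injective on Gl
  have hinj : ∀ a ∈ Gl, ∀ b ∈ Gl, GB.lexp m a = GB.lexp m b → a = b := by
    have hsym : Symmetric (fun g h : MvPolynomial (Fin n) ℚ =>
        GB.lexp m g ≠ GB.lexp m h) := fun a b h e => h e.symm
    have hp : Gl.Pairwise (fun g h => GB.lexp m g ≠ GB.lexp m h) :=
      hsort.imp (fun h e => (ne_of_lt h) (congrArg m.toSyn e))
    intro a ha b hb he
    by_contra hne
    exact (haveI : Std.Symm (fun g h : MvPolynomial (Fin n) ℚ =>
        GB.lexp m g ≠ GB.lexp m h) := ⟨fun a b h => hsym h⟩; hp.forall ha hb hne he)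
  -- the matching function
  set Φ : MvPolynomial (Fin n) ℚ → MvPolynomial (Fin n) ℤ := fun g =>
    if h : ∃ t, t ∈ Gt ∧ GB.lexp m t = GB.lexp m g then h.choose else 0 with hΦdef
  have hΦ : ∀ g ∈ Gl, Φ g ∈ Gt ∧ GB.lexp m (Φ g) = GB.lexp m g := by
    intro g hg
    have h := hmatch g hg
    simp only [hΦdef, dif_pos h]
    exact h.choose_spec
  set front := Gl.map Φ with hfront
  have hflen : front.length = Gl.length := List.length_map Φ
  have hfinj : ∀ a ∈ Gl, ∀ b ∈ Gl, Φ a = Φ b → a = b := by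
    intro a ha b hb he
    exact hinj a ha b hb (by rw [← (hΦ a ha).2, ← (hΦ b hb).2, he])
  have hfnd : front.Nodup := List.Nodup.map_on hfinj hGnd
  have hfsubGt : ∀ x ∈ front, x ∈ Gt := by
    intro x hx
    obtain ⟨g, hg, rfl⟩ := List.mem_map.mp hx
    exact (hΦ g hg).1
  set back := (Gt \ front.toFinset).toList with hback
  have hbnd : back.Nodup := Finset.nodup_toList _
  have hbmem : ∀ x ∈ back, x ∈ Gt ∧ x ∉ front := by
    intro x hx
    have := Finset.mem_sdiff.mp (Finset.mem_toList.mp hx)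
    exact ⟨this.1, fun h => this.2 (List.mem_toFinset.mpr h)⟩
  refine ⟨front ++ back, ?_, ?_, ?_, ?_, ?_⟩
  · rw [List.nodup_append]
    exact ⟨hfnd, hbnd, fun x hx y hy hxy => (hbmem y hy).2 (hxy ▸ hx)⟩
  · rw [List.toFinset_append]
    have h1 : back.toFinset = Gt \ front.toFinset := by
      rw [hback, Finset.toList_toFinset]
    rw [h1]
    exact Finset.union_sdiff_of_subset (fun x hx => hfsubGt x (List.mem_toFinset.mp hx))
  · rw [List.length_append, hflen]
    exact Nat.le_add_right _ _
  · intro i hi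
    have hif : i < front.length := hflen ▸ hi
    have hiall : i < (front ++ back).length := by
      rw [List.length_append]; omega
    rw [List.getD_eq_getElem _ _ hiall, List.getD_eq_getElem _ _ hi,
      List.getElem_append_left hif]
    have h1 : front[i] = Φ Gl[i] := List.getElem_map Φ
    rw [h1]
    exact (hΦ _ (List.getElem_mem hi)).2
  · intro i hge hlt
    have hgef : front.length ≤ i := hflen ▸ hge
    have hib : i - front.length < back.length := by
      rw [List.length_append] at hlt; omega
    have hgetb : (front ++ back).getD i 0 = back[i - front.length] := by
      rw [List.getD_eq_getElem _ _ hlt, List.getElem_append_right hgef]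
    set t := back[i - front.length] with htdef
    have htb : t ∈ back := List.getElem_mem hib
    obtain ⟨htGt, htnf⟩ := hbmem t htb
    obtain ⟨g, hg, hle⟩ := hlowJ t (hTJ t htGt) (hTne t htGt)
    obtain ⟨j, hj, hgj⟩ := List.mem_iff_getElem.mp hg
    refine ⟨j, hj, ?_, ?_⟩
    · rw [List.getD_eq_getElem _ _ hj, hgj, hgetb]
      exact hle
    · rw [List.getD_eq_getElem _ _ hj, hgj, hgetb]
      intro heq
      have hΦg := hΦ g hg
      have hnet : Φ g ≠ t := fun h => htnf (h ▸ List.mem_map_of_mem (f := Φ) hg)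
      exact noTwo (Φ g) hΦg.1 t htGt hnet (by rw [hΦg.2, ← heq])
end

section
/- With the setup of the previous statement (G_σ the reduced σ-Gröbner basis of a nonzero ideal I ⊆ Q[x_1,...,x_n], and G̃ a minimal strong σ-Gröbner basis of ⟨prim(G_σ)⟩ ⊆ Z[x_1,...,x_n] indexed so LT_σ(g̃_i) = LT_σ(g_i) for i ≤ r): for each i = 1,...,r, the leading coefficient LC_σ(g̃_i) divides the leading coefficient LC_σ(prim(g_i)), which equals den(g_i). -/
open MvPolynomial
open scoped Classical

namespace GBAux

open GB

variable {n : ℕ} (m : MonomialOrder (Fin n))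

lemma toSyn_le_lexp {K : Type*} [CommSemiring K] {f : MvPolynomial (Fin n) K} {d : Fin n →₀ ℕ}
    (hd : d ∈ f.support) : m.toSyn d ≤ m.toSyn (lexp m f) := by
  rw [lexp, AddEquiv.apply_symm_apply]
  exact Finset.le_sup hd

lemma lexp_mem_support {K : Type*} [CommSemiring K] {f : MvPolynomial (Fin n) K} (hf : f ≠ 0) :
    lexp m f ∈ f.support := by
  have h : f.support.Nonempty := MvPolynomial.support_nonempty.2 hf
  obtain ⟨d, hd, hds⟩ := Finset.exists_mem_eq_sup f.support h (fun d => m.toSyn d)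
  rw [lexp, hds, AddEquiv.symm_apply_apply]; exact hd

lemma lcoeff_ne_zero {K : Type*} [CommSemiring K] {f : MvPolynomial (Fin n) K} (hf : f ≠ 0) :
    lcoeff m f ≠ 0 := by
  have := lexp_mem_support m hf
  rwa [MvPolynomial.mem_support_iff] at this

lemma lexp_eq_of {K : Type*} [CommSemiring K] {f : MvPolynomial (Fin n) K} {e : Fin n →₀ ℕ}
    (he : e ∈ f.support) (hmax : ∀ d ∈ f.support, m.toSyn d ≤ m.toSyn e) :
    lexp m f = e := by
  have h : f.support.sup (fun d => m.toSyn d) = m.toSyn e :=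
    le_antisymm (Finset.sup_le hmax) (Finset.le_sup he)
  rw [lexp, h, AddEquiv.symm_apply_apply]

lemma lexp_eq_of_support_eq {K L : Type*} [CommSemiring K] [CommSemiring L]
    {f : MvPolynomial (Fin n) K} {g : MvPolynomial (Fin n) L}
    (h : f.support = g.support) : lexp m f = lexp m g := by
  rw [lexp, lexp, h]

lemma coeff_sum_monomial {K : Type*} [CommSemiring K] (s : Finset (Fin n →₀ ℕ))
    (a : (Fin n →₀ ℕ) → K) (d : Fin n →₀ ℕ) :
    MvPolynomial.coeff d (s.sum fun e => MvPolynomial.monomial e (a e)) =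
      if d ∈ s then a d else 0 := by
  rw [MvPolynomial.coeff_sum]
  simp [MvPolynomial.coeff_monomial]

lemma den_ne_zero (f : MvPolynomial (Fin n) ℚ) : den f ≠ 0 := by
  intro h
  rw [den, Finset.lcm_eq_zero_iff] at h
  obtain ⟨d, _, hd⟩ := h
  exact (Rat.den_pos _).ne' hd

lemma den_dvd {f : MvPolynomial (Fin n) ℚ} {d : Fin n →₀ ℕ} (hd : d ∈ f.support) :
    (MvPolynomial.coeff d f).den ∣ den f := Finset.dvd_lcm hd

lemma rat_mul_den_eq (q : ℚ) (D : ℕ) (h : q.den ∣ D) :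
    q * (D : ℚ) = ((q.num * ((D / q.den : ℕ) : ℤ) : ℤ) : ℚ) := by
  obtain ⟨c, rfl⟩ := h
  rw [Nat.mul_div_cancel_left c q.den_pos]
  push_cast
  rw [← mul_assoc, Rat.mul_den_eq_num]

lemma rat_mul_den_num (q : ℚ) (D : ℕ) (h : q.den ∣ D) :
    (q * (D : ℚ)).num = q.num * ((D / q.den : ℕ) : ℤ) := by
  rw [rat_mul_den_eq q D h, Rat.num_intCast]

lemma rat_mul_den_cast (q : ℚ) (D : ℕ) (h : q.den ∣ D) :
    (((q * (D : ℚ)).num : ℤ) : ℚ) = q * (D : ℚ) := by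
  rw [rat_mul_den_eq q D h, Rat.num_intCast]

lemma coeff_intScale (f : MvPolynomial (Fin n) ℚ) (d : Fin n →₀ ℕ) :
    MvPolynomial.coeff d (intScale f) =
      if d ∈ f.support then (MvPolynomial.coeff d f * (den f : ℚ)).num else 0 := by
  rw [intScale, coeff_sum_monomial]

lemma support_intScale (f : MvPolynomial (Fin n) ℚ) : (intScale f).support = f.support := by
  ext d
  rw [MvPolynomial.mem_support_iff, coeff_intScale]
  constructor
  · intro h
    by_contra hd
    simp [hd] at h
  · intro hd
    rw [if_pos hd]
    rw [MvPolynomial.mem_support_iff] at hd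
    have hD : ((den f : ℕ) : ℚ) ≠ 0 := by exact_mod_cast den_ne_zero f
    exact Rat.num_ne_zero.2 (mul_ne_zero hd hD)
lemma lcm_ne_zero_nat {α : Type*} (s : Finset α) (f : α → ℕ) (hf : ∀ a ∈ s, f a ≠ 0) :
    s.lcm f ≠ 0 := by
  intro h
  rw [Finset.lcm_eq_zero_iff] at h
  obtain ⟨b, hb, hb0⟩ := h
  exact hf b hb hb0

lemma factorization_finset_lcm {α : Type*} (s : Finset α) (f : α → ℕ)
    (hf : ∀ a ∈ s, f a ≠ 0) (p : ℕ) :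
    (s.lcm f).factorization p = s.sup fun a => (f a).factorization p := by
  classical
  induction s using Finset.induction_on with
  | empty => simp
  | @insert a s ha ih =>
    have hfa : f a ≠ 0 := hf a (Finset.mem_insert_self a s)
    have hfs : ∀ b ∈ s, f b ≠ 0 := fun b hb => hf b (Finset.mem_insert_of_mem hb)
    rw [Finset.lcm_insert, Finset.sup_insert, ← ih hfs]
    have h2 : (lcm (f a) (s.lcm f)) = Nat.lcm (f a) (s.lcm f) := rfl
    rw [h2, Nat.factorization_lcm hfa (lcm_ne_zero_nat s f hfs), Finsupp.sup_apply]
lemma content_one {g : MvPolynomial (Fin n) ℚ} (hg : g ≠ 0) (h1 : lcoeff m g = 1) :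
    g.support.gcd (fun d => (MvPolynomial.coeff d g * (den g : ℚ)).num) = 1 := by
  classical
  set D := den g with hDdef
  have hD : D ≠ 0 := den_ne_zero g
  set t := g.support.gcd (fun d => (MvPolynomial.coeff d g * (D : ℚ)).num) with htdef
  have he : lexp m g ∈ g.support := lexp_mem_support m hg
  have htD : t ∣ (D : ℤ) := by
    have h2 : t ∣ (MvPolynomial.coeff (lexp m g) g * (D : ℚ)).num := Finset.gcd_dvd he
    rw [show MvPolynomial.coeff (lexp m g) g = 1 from h1, one_mul, Rat.num_natCast] at h2
    exact h2
  have htn : 0 ≤ t := Int.nonneg_of_normalize_eq_self Finset.normalize_gcd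
  by_contra hne
  have htabs : t.natAbs ≠ 1 := by
    intro h
    rcases Int.natAbs_eq_iff.1 h with h' | h'
    · exact hne (by simpa using h')
    · rw [h'] at htn; norm_num at htn
  obtain ⟨p, hp, hpt⟩ := Nat.exists_prime_and_dvd htabs
  have hptZ : (p : ℤ) ∣ t := (Int.natCast_dvd_natCast.2 hpt).trans (Int.natAbs_dvd.2 dvd_rfl)
  have hpD : p ∣ D := Int.natCast_dvd_natCast.1 (hptZ.trans htD)
  set k := D.factorization p with hkdef
  have hk : 0 < k := hp.factorization_pos_of_dvd hD hpD
  -- find d0 realizing the max denominator valuation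
  have hsupne : g.support.Nonempty := ⟨lexp m g, he⟩
  have hlcm : k = g.support.sup fun d => ((MvPolynomial.coeff d g).den).factorization p := by
    rw [hkdef, hDdef, den, factorization_finset_lcm _ _ (fun d _ => (Rat.den_pos _).ne')]
  obtain ⟨d0, hd0, hd0s⟩ := Finset.exists_mem_eq_sup g.support hsupne
    (fun d => ((MvPolynomial.coeff d g).den).factorization p)
  set q := MvPolynomial.coeff d0 g with hqdef
  have hqk : q.den.factorization p = k := by rw [hlcm, hd0s]
  have hpden : p ∣ q.den := Nat.dvd_of_factorization_pos (by rw [hqk]; exact hk.ne')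
  have hdendvd : q.den ∣ D := den_dvd hd0
  have hct : t ∣ (MvPolynomial.coeff d0 g * (D : ℚ)).num := Finset.gcd_dvd hd0
  rw [← hqdef] at hct
  rw [rat_mul_den_num q D hdendvd] at hct
  have hpP : Prime (p : ℤ) := Nat.prime_iff_prime_int.1 hp
  rcases hpP.dvd_mul.1 (hptZ.trans hct) with hc1 | hc2
  · -- p divides the numerator: contradicts reducedness
    have : p ∣ q.num.natAbs := by
      have := Int.natAbs_dvd_natAbs.2 hc1
      simpa using this
    have hco : Nat.Coprime q.num.natAbs q.den := q.reduced
    have : p ∣ 1 := hco ▸ Nat.dvd_gcd this hpden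
    exact hp.one_lt.ne' (Nat.dvd_one.1 this)
  · -- p divides D / q.den: contradicts valuation count
    have hdvdnat : p ∣ D / q.den := Int.natCast_dvd_natCast.1 hc2
    have hne0 : D / q.den ≠ 0 :=
      (Nat.div_pos (Nat.le_of_dvd (Nat.pos_of_ne_zero hD) hdendvd)
        (Rat.den_pos q)).ne'
    have hfz : (D / q.den).factorization p = 0 := by
      rw [Nat.factorization_div hdendvd]
      simp [hqk, hkdef]
    have := hp.factorization_pos_of_dvd hne0 hdvdnat
    rw [hfz] at this
    exact lt_irrefl 0 this
lemma primQ_eq_intScale {g : MvPolynomial (Fin n) ℚ} (hg : g ≠ 0) (h1 : lcoeff m g = 1) :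
    primQ g = intScale g := by
  have hc : (intScale g).support.gcd (fun e => MvPolynomial.coeff e (intScale g)) = 1 := by
    rw [Finset.gcd_congr (support_intScale g)
      (fun d hd => by rw [coeff_intScale, if_pos hd])]
    exact content_one m hg h1
  rw [primQ, hc]
  simp only [Int.ediv_one]
  exact MvPolynomial.support_sum_monomial_coeff (intScale g)

lemma lexp_primQ {g : MvPolynomial (Fin n) ℚ} (hg : g ≠ 0) (h1 : lcoeff m g = 1) :
    lexp m (primQ g) = lexp m g := by
  rw [primQ_eq_intScale m hg h1]
  exact lexp_eq_of_support_eq m (support_intScale g)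

lemma lcoeff_primQ {g : MvPolynomial (Fin n) ℚ} (hg : g ≠ 0) (h1 : lcoeff m g = 1) :
    lcoeff m (primQ g) = (den g : ℤ) := by
  rw [GB.lcoeff, lexp_primQ m hg h1, primQ_eq_intScale m hg h1, coeff_intScale,
    if_pos (lexp_mem_support m hg),
    show MvPolynomial.coeff (lexp m g) g = 1 from h1, one_mul, Rat.num_natCast]

lemma primQ_ne_zero {g : MvPolynomial (Fin n) ℚ} (hg : g ≠ 0) (h1 : lcoeff m g = 1) :
    primQ g ≠ 0 := by
  intro h
  have := lcoeff_primQ m hg h1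
  rw [h] at this
  simp [GB.lcoeff] at this
  exact den_ne_zero g (by exact_mod_cast this.symm)

lemma support_map_int (f : MvPolynomial (Fin n) ℤ) :
    (MvPolynomial.map (Int.castRingHom ℚ) f).support = f.support := by
  ext d
  simp [MvPolynomial.mem_support_iff, MvPolynomial.coeff_map]

lemma lexp_map_int (f : MvPolynomial (Fin n) ℤ) :
    lexp m (MvPolynomial.map (Int.castRingHom ℚ) f) = lexp m f :=
  lexp_eq_of_support_eq m (support_map_int f)

lemma map_int_ne_zero {f : MvPolynomial (Fin n) ℤ} (hf : f ≠ 0) :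
    MvPolynomial.map (Int.castRingHom ℚ) f ≠ 0 := by
  intro h
  apply hf
  rw [← MvPolynomial.support_eq_empty, ← support_map_int f, h,
    MvPolynomial.support_zero]

lemma map_intScale (g : MvPolynomial (Fin n) ℚ) :
    MvPolynomial.map (Int.castRingHom ℚ) (intScale g) = MvPolynomial.C ((den g : ℚ)) * g := by
  ext d
  rw [MvPolynomial.coeff_map, coeff_intScale, MvPolynomial.coeff_C_mul]
  by_cases hd : d ∈ g.support
  · rw [if_pos hd]
    have h2 := rat_mul_den_cast (MvPolynomial.coeff d g) (den g) (den_dvd hd)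
    show (((MvPolynomial.coeff d g * (den g : ℚ)).num : ℤ) : ℚ) = _
    rw [h2, mul_comm]
  · rw [if_neg hd]
    rw [MvPolynomial.notMem_support_iff] at hd
    simp [hd]

lemma map_J_mem {I : Ideal (MvPolynomial (Fin n) ℚ)} {G : Finset (MvPolynomial (Fin n) ℚ)}
    (hGI : (G : Set (MvPolynomial (Fin n) ℚ)) ⊆ I) (h0 : (0 : MvPolynomial (Fin n) ℚ) ∉ G)
    (hmon : ∀ g ∈ G, lcoeff m g = 1) {f : MvPolynomial (Fin n) ℤ}
    (hf : f ∈ Ideal.span (GB.primQ '' (G : Set (MvPolynomial (Fin n) ℚ)))) :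
    MvPolynomial.map (Int.castRingHom ℚ) f ∈ I := by
  have hmap := Ideal.mem_map_of_mem (MvPolynomial.map (Int.castRingHom ℚ)) hf
  rw [Ideal.map_span] at hmap
  refine Ideal.span_le.2 ?_ hmap
  rintro x ⟨y, ⟨g, hgG, rfl⟩, rfl⟩
  have hg0 : g ≠ 0 := fun h => h0 (h ▸ hgG)
  rw [primQ_eq_intScale m hg0 (hmon g hgG), map_intScale]
  exact I.mul_mem_left _ (hGI hgG)

lemma lexp_sandwich {I : Ideal (MvPolynomial (Fin n) ℚ)} {Gl : List (MvPolynomial (Fin n) ℚ)}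
    (hGred : IsReducedGB m Gl.toFinset I) {f : MvPolynomial (Fin n) ℤ}
    (hfJ : f ∈ Ideal.span (GB.primQ '' (Gl.toFinset : Set (MvPolynomial (Fin n) ℚ))))
    (hf0 : f ≠ 0) {g : MvPolynomial (Fin n) ℚ} (hgG : g ∈ Gl.toFinset)
    (hle : lexp m f ≤ lexp m g) : lexp m f = lexp m g := by
  obtain ⟨⟨h0, hGI, hspan, hGB⟩, hmon, hred⟩ := hGred
  have hfI : MvPolynomial.map (Int.castRingHom ℚ) f ∈ I := map_J_mem m hGI h0 hmon hfJ
  have hfm0 : MvPolynomial.map (Int.castRingHom ℚ) f ≠ 0 := map_int_ne_zero hf0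
  obtain ⟨g', hg'G, hg'le⟩ := hGB _ hfI hfm0
  rw [lexp_map_int] at hg'le
  have hg0 : g ≠ 0 := fun h => h0 (h ▸ hgG)
  have hgg : g' = g := by
    by_contra hne
    exact hred g hgG (lexp m g) (lexp_mem_support m hg0) g' hg'G hne (hg'le.trans hle)
  rw [hgg] at hg'le
  exact le_antisymm hle hg'le

lemma getD_mem_toFinset {α : Type*} [DecidableEq α] (L : List α) (i : ℕ) (h : i < L.length)
    (d : α) : L.getD i d ∈ L.toFinset := by
  rw [List.getD_eq_getElem L d h]
  exact List.mem_toFinset.2 (List.getElem_mem h)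
end GBAux

/-- with the indexing of Statement 10, `LC_σ(g̃_i)` divides
`LC_σ(prim(g_i)) = den(g_i)` for `i = 1, …, r`. -/
theorem stmt11 {n : ℕ} (m : MonomialOrder (Fin n))
    (I : Ideal (MvPolynomial (Fin n) ℚ)) (hI : I ≠ ⊥)
    (Gl : List (MvPolynomial (Fin n) ℚ)) (hGnd : Gl.Nodup)
    (hGred : GB.IsReducedGB m Gl.toFinset I)
    (hsort : Gl.Pairwise fun g h => m.toSyn (GB.lexp m g) < m.toSyn (GB.lexp m h))
    (Gtl : List (MvPolynomial (Fin n) ℤ)) (hGtnd : Gtl.Nodup)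
    (hGt : GB.IsMinStrongGB m Gtl.toFinset
      (Ideal.span (GB.primQ '' (Gl.toFinset : Set (MvPolynomial (Fin n) ℚ)))))
    (hlen : Gl.length ≤ Gtl.length)
    (hidx : ∀ i < Gl.length, GB.lexp m (Gtl.getD i 0) = GB.lexp m (Gl.getD i 0)) :
    ∀ i < Gl.length,
      GB.lcoeff m (Gtl.getD i 0) ∣ GB.lcoeff m (GB.primQ (Gl.getD i 0)) ∧
      GB.lcoeff m (GB.primQ (Gl.getD i 0)) = (GB.den (Gl.getD i 0) : ℤ) := by
  intro i hi
  obtain ⟨⟨hGt0, hGtspan, hGtstrong⟩, hGtmin⟩ := hGt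
  set gi := Gl.getD i 0 with hgidef
  set gti := Gtl.getD i 0 with hgtidef
  have hgiG : gi ∈ Gl.toFinset := GBAux.getD_mem_toFinset Gl i hi 0
  have hgtiG : gti ∈ Gtl.toFinset := GBAux.getD_mem_toFinset Gtl i (lt_of_lt_of_le hi hlen) 0
  have hgi0 : gi ≠ 0 := fun h => hGred.1.1 (h ▸ hgiG)
  have hgimon : GB.lcoeff m gi = 1 := hGred.2.1 _ hgiG
  have hpart2 : GB.lcoeff m (GB.primQ gi) = (GB.den gi : ℤ) :=
    GBAux.lcoeff_primQ m hgi0 hgimon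
  refine ⟨?_, hpart2⟩
  set e := GB.lexp m gi with hedef
  have hgtie : GB.lexp m gti = e := hidx i hi
  have hgti0 : gti ≠ 0 := fun h => hGt0 (h ▸ hgtiG)
  -- primQ gi is a nonzero element of J
  have hprimJ : GB.primQ gi ∈
      Ideal.span (GB.primQ '' (Gl.toFinset : Set (MvPolynomial (Fin n) ℚ))) :=
    Ideal.subset_span ⟨gi, Finset.mem_coe.2 hgiG, rfl⟩
  have hprim0 : GB.primQ gi ≠ 0 := GBAux.primQ_ne_zero m hgi0 hgimon
  obtain ⟨gj, hgjG, hdvd⟩ := hGtstrong _ hprimJ hprim0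
  rw [GB.LM, GB.LM, MvPolynomial.monomial_dvd_monomial] at hdvd
  have hlcp : GB.lcoeff m (GB.primQ gi) ≠ 0 := by
    rw [hpart2]
    exact_mod_cast GBAux.den_ne_zero gi
  have hgjle : GB.lexp m gj ≤ e := by
    rcases hdvd.1 with h | h
    · exact absurd h hlcp
    · rwa [GBAux.lexp_primQ m hgi0 hgimon] at h
  have hgj0 : gj ≠ 0 := fun h => hGt0 (h ▸ hgjG)
  have hgjJ : gj ∈ Ideal.span (GB.primQ '' (Gl.toFinset : Set (MvPolynomial (Fin n) ℚ))) := by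
    rw [← hGtspan]
    exact Ideal.subset_span (Finset.mem_coe.2 hgjG)
  have hgje : GB.lexp m gj = e := GBAux.lexp_sandwich m hGred hgjJ hgj0 hgiG hgjle
  -- Bezout combination of gj and gti
  set a := GB.lcoeff m gj with hadef
  set b := GB.lcoeff m gti with hbdef
  have ha0 : a ≠ 0 := GBAux.lcoeff_ne_zero m hgj0
  have hb0 : b ≠ 0 := GBAux.lcoeff_ne_zero m hgti0
  set u := Int.gcdA a b with hudef
  set v := Int.gcdB a b with hvdef
  set h := MvPolynomial.C u * gj + MvPolynomial.C v * gti with hhdef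
  have hcoeffgj : MvPolynomial.coeff e gj = a := by rw [hadef, GB.lcoeff, hgje]
  have hcoeffgti : MvPolynomial.coeff e gti = b := by rw [hbdef, GB.lcoeff, hgtie]
  have hcoeffh : MvPolynomial.coeff e h = (Int.gcd a b : ℤ) := by
    rw [hhdef, MvPolynomial.coeff_add, MvPolynomial.coeff_C_mul, MvPolynomial.coeff_C_mul,
      hcoeffgj, hcoeffgti, Int.gcd_eq_gcd_ab]
    ring
  have hgcd0 : (Int.gcd a b : ℤ) ≠ 0 := by
    intro hz
    rw [Int.natCast_eq_zero, Int.gcd_eq_zero_iff] at hz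
    exact ha0 hz.1
  have hesupp : e ∈ h.support := by
    rw [MvPolynomial.mem_support_iff, hcoeffh]
    exact hgcd0
  have hh0 : h ≠ 0 := fun hz => by simp [hz] at hesupp
  have hhJ : h ∈ Ideal.span (GB.primQ '' (Gl.toFinset : Set (MvPolynomial (Fin n) ℚ))) := by
    rw [← hGtspan]
    have h1 : gj ∈ Ideal.span (Gtl.toFinset : Set (MvPolynomial (Fin n) ℤ)) :=
      Ideal.subset_span (Finset.mem_coe.2 hgjG)
    have h2 : gti ∈ Ideal.span (Gtl.toFinset : Set (MvPolynomial (Fin n) ℤ)) :=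
      Ideal.subset_span (Finset.mem_coe.2 hgtiG)
    exact Ideal.add_mem _ (Ideal.mul_mem_left _ _ h1) (Ideal.mul_mem_left _ _ h2)
  have hlexph : GB.lexp m h = e := by
    refine GBAux.lexp_eq_of m hesupp ?_
    intro d hd
    rw [MvPolynomial.mem_support_iff, hhdef, MvPolynomial.coeff_add,
      MvPolynomial.coeff_C_mul, MvPolynomial.coeff_C_mul] at hd
    have : MvPolynomial.coeff d gj ≠ 0 ∨ MvPolynomial.coeff d gti ≠ 0 := by
      by_contra hc
      push_neg at hc
      rw [hc.1, hc.2] at hd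
      simp at hd
    rcases this with hc | hc
    · have := GBAux.toSyn_le_lexp m (MvPolynomial.mem_support_iff.2 hc)
      rwa [hgje] at this
    · have := GBAux.toSyn_le_lexp m (MvPolynomial.mem_support_iff.2 hc)
      rwa [hgtie] at this
  obtain ⟨gk, hgkG, hdvdk⟩ := hGtstrong _ hhJ hh0
  rw [GB.LM, GB.LM, MvPolynomial.monomial_dvd_monomial] at hdvdk
  have hlch : GB.lcoeff m h = (Int.gcd a b : ℤ) := by rw [GB.lcoeff, hlexph, hcoeffh]
  have hgkle : GB.lexp m gk ≤ e := by
    rcases hdvdk.1 with hz | hz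
    · exact absurd (hlch ▸ hz) hgcd0
    · rwa [hlexph] at hz
  have hgkdvd : GB.lcoeff m gk ∣ (Int.gcd a b : ℤ) := hlch ▸ hdvdk.2
  have hgk0 : gk ≠ 0 := fun hz => hGt0 (hz ▸ hgkG)
  have hgkJ : gk ∈ Ideal.span (GB.primQ '' (Gl.toFinset : Set (MvPolynomial (Fin n) ℚ))) := by
    rw [← hGtspan]
    exact Ideal.subset_span (Finset.mem_coe.2 hgkG)
  have hgke : GB.lexp m gk = e := GBAux.lexp_sandwich m hGred hgkJ hgk0 hgiG hgkle
  have hkj : gk = gj := by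
    by_contra hne
    refine hGtmin gk hgkG gj hgjG hne ?_
    rw [GB.LM, GB.LM, MvPolynomial.monomial_dvd_monomial, hgke, hgje]
    exact ⟨Or.inr le_rfl, hgkdvd.trans (Int.gcd_dvd_left _ _)⟩
  have hki : gk = gti := by
    by_contra hne
    refine hGtmin gk hgkG gti hgtiG hne ?_
    rw [GB.LM, GB.LM, MvPolynomial.monomial_dvd_monomial, hgke, hgtie]
    exact ⟨Or.inr le_rfl, hgkdvd.trans (Int.gcd_dvd_right _ _)⟩
  have hji : gj = gti := hkj ▸ hki
  rw [hbdef, ← hji, ← hadef]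
  exact hdvd.2
end
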